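/- arXiv:1601.06327 — 3 statements merged into one kernel-verified Lean document; each statement's English description precedes it below -/
import Mathlib

section
/- A 1×n array whose single row is a permutation of {1,...,n} is a Latin rectangle, and any k×n Latin rectangle with k < n can be extended to a (k+1)×n Latin rectangle (by Hall's marriage theorem). -/
/-- A single permutation row is a Latin rectangle, and every k×n Latin rectangle
with k < n extends to a (k+1)×n Latin rectangle: there is a bijective new row
avoiding, in each column, all symbols already present in that column. -/
theorem stmt_14 (n k : ℕ) (hk : k < n)
    (L : Fin k → Fin n → Fin n)
    (hrow : ∀ i, Function.Bijective (L i))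
    (hcol : ∀ j : Fin n, Function.Injective (fun i => L i j)) :
    (∀ r : Fin n → Fin n, Function.Bijective r →
      ((∀ i : Fin 1, Function.Bijective (fun j : Fin n => r j)) ∧
       (∀ j : Fin n, Function.Injective (fun _ : Fin 1 => r j)))) ∧
    (∃ r : Fin n → Fin n, Function.Bijective r ∧ ∀ j i, L i j ≠ r j) := by
  constructor
  · intro r hr
    exact ⟨fun _ => hr, fun j a b _ => Subsingleton.elim a b⟩
  · -- t j = symbols missing from column j
    set t : Fin n → Finset (Fin n) :=
      fun j => Finset.univ.filter (fun s => ∀ i, L i j ≠ s) with ht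
    -- columns containing symbol s
    have hCcard : ∀ s : Fin n,
        (Finset.univ.filter (fun j => s ∈ t j)).card = n - k := by
      intro s
      have heq : Finset.univ.filter (fun j => s ∈ t j)
          = (Finset.univ.image
              (fun i => (Equiv.ofBijective (L i) (hrow i)).symm s))ᶜ := by
        ext j
        simp only [ht, Finset.mem_filter, Finset.mem_univ, true_and,
          Finset.mem_compl, Finset.mem_image, not_exists]
        constructor
        · intro h i hi
          subst hi
          exact h i (Equiv.ofBijective_apply_symm_apply (L i) (hrow i) s)
        · intro h i hLi
          apply h i
          rw [Equiv.symm_apply_eq]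
          exact hLi.symm
      have himg : (Finset.univ.image
          (fun i => (Equiv.ofBijective (L i) (hrow i)).symm s)).card = k := by
        rw [Finset.card_image_of_injective _ ?_, Finset.card_univ, Fintype.card_fin]
        intro a b hab
        have hab' : (Equiv.ofBijective (L a) (hrow a)).symm s
            = (Equiv.ofBijective (L b) (hrow b)).symm s := hab
        have ha := Equiv.ofBijective_apply_symm_apply (L a) (hrow a) s
        have hb := Equiv.ofBijective_apply_symm_apply (L b) (hrow b) s
        rw [← hab'] at hb
        exact hcol ((Equiv.ofBijective (L a) (hrow a)).symm s) (ha.trans hb.symm)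
      rw [heq, Finset.card_compl, himg, Fintype.card_fin]
    have htcard : ∀ j, (t j).card = n - k := by
      intro j
      have heq : t j = (Finset.univ.image (fun i => L i j))ᶜ := by
        ext s
        simp [ht, eq_comm]
      have : (Finset.univ.image (fun i => L i j)).card = k := by
        rw [Finset.card_image_of_injective _ (hcol j), Finset.card_univ,
          Fintype.card_fin]
      rw [heq, Finset.card_compl, this, Fintype.card_fin]
    -- Hall's condition
    have hall : ∀ S : Finset (Fin n), S.card ≤ (S.biUnion t).card := by
      intro S
      have hpos : 0 < n - k := Nat.sub_pos_of_lt hk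
      have key : S.card * (n - k) ≤ (S.biUnion t).card * (n - k) := by
        calc S.card * (n - k) = ∑ j ∈ S, (t j).card := by
              rw [Finset.sum_congr rfl (fun j _ => htcard j)]
              simp [Finset.sum_const, mul_comm]
          _ = ∑ j ∈ S, ∑ s ∈ S.biUnion t, (if s ∈ t j then 1 else 0) := by
              refine Finset.sum_congr rfl (fun j hj => ?_)
              rw [← Finset.card_filter]
              congr 1
              ext s
              simp only [Finset.mem_filter, Finset.mem_biUnion]
              exact ⟨fun hs => ⟨⟨j, hj, hs⟩, hs⟩, fun h => h.2⟩
          _ = ∑ s ∈ S.biUnion t, (S.filter (fun j => s ∈ t j)).card := by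
              rw [Finset.sum_comm]
              exact Finset.sum_congr rfl (fun s _ => (Finset.card_filter _ _).symm)
          _ ≤ ∑ _s ∈ S.biUnion t, (n - k) := by
              refine Finset.sum_le_sum (fun s _ => ?_)
              rw [← hCcard s]
              exact Finset.card_le_card
                (Finset.filter_subset_filter _ (Finset.subset_univ S))
          _ = (S.biUnion t).card * (n - k) := by
              rw [Finset.sum_const, smul_eq_mul]
      exact Nat.le_of_mul_le_mul_right key hpos
    obtain ⟨f, hfinj, hf⟩ :=
      (Finset.all_card_le_biUnion_card_iff_existsInjective' t).mp hall
    refine ⟨f, (Finite.injective_iff_bijective).mp hfinj, fun j i => ?_⟩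
    have := hf j
    simp only [ht, Finset.mem_filter] at this
    exact this.2 i
end

section
/- The bipartite 'missing symbol' relation of a k×n Latin rectangle with k < n satisfies Hall's condition: for every finite set A of columns, the set of symbols missing from at least one column of A has size at least |A|. -/
/-- The 'missing symbol' relation of a k×n Latin rectangle with k < n satisfies
Hall's condition: any set A of columns misses at least |A| symbols in total. -/
theorem stmt_16 (k n : ℕ) (hk : k < n) (L : Fin k → Fin n → Fin n)
    (hrow : ∀ i, Function.Bijective (L i))
    (hcol : ∀ j : Fin n, Function.Injective (fun i => L i j)) :
    ∀ A : Finset (Fin n),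
      A.card ≤ (A.biUnion (fun j => Finset.univ.filter (fun s => ∀ i, L i j ≠ s))).card := by
  intro A
  set Miss : Fin n → Finset (Fin n) :=
    fun j => Finset.univ.filter (fun s => ∀ i, L i j ≠ s) with hMiss
  set B := A.biUnion Miss with hB
  -- each column misses exactly n - k symbols
  have hcard1 : ∀ j, (Miss j).card = n - k := by
    intro j
    have : Miss j = (Finset.univ.image (fun i => L i j))ᶜ := by
      ext s
      simp [hMiss, eq_comm]
    rw [this, Finset.card_compl, Finset.card_image_of_injective _ (hcol j)]
    simp
  -- each symbol is missing from exactly n - k columns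
  have hcard2 : ∀ s, (Finset.univ.filter (fun j => ∀ i, L i j ≠ s)).card = n - k := by
    intro s
    have : Finset.univ.filter (fun j => ∀ i, L i j ≠ s)
        = (Finset.univ.image (fun i => (Equiv.ofBijective (L i) (hrow i)).symm s))ᶜ := by
      ext j
      simp only [Finset.mem_filter, Finset.mem_univ, true_and, Finset.mem_compl,
        Finset.mem_image, not_exists]
      constructor
      · intro h i hji
        exact h i (by rw [← hji]; exact Equiv.ofBijective_apply_symm_apply _ _ _)
      · intro h i hji
        exact h i (by rw [← hji]; exact (Equiv.ofBijective (L i) (hrow i)).symm_apply_apply _)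
    rw [this, Finset.card_compl, Finset.card_image_of_injective]
    · simp
    · intro i i' hii'
      simp only at hii'
      have h2 : L i ((Equiv.ofBijective (L i) (hrow i)).symm s)
          = L i' ((Equiv.ofBijective (L i') (hrow i')).symm s) := by
        rw [Equiv.ofBijective_apply_symm_apply (L i) (hrow i),
          Equiv.ofBijective_apply_symm_apply (L i') (hrow i')]
      rw [hii'] at h2
      exact hcol _ h2
  have hpos : 0 < n - k := Nat.sub_pos_of_lt hk
  -- double counting
  have hsub : ∀ j ∈ A, Miss j ⊆ B := fun j hj => Finset.subset_biUnion_of_mem Miss hj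
  have hL : (n - k) * A.card = ∑ j ∈ A, (B.filter (fun s => s ∈ Miss j)).card := by
    rw [Finset.sum_congr rfl (fun j hj => by
      rw [Finset.filter_mem_eq_inter, Finset.inter_eq_right.mpr (hsub j hj), hcard1])]
    simp [mul_comm]
  have hswap : ∑ j ∈ A, (B.filter (fun s => s ∈ Miss j)).card
      = ∑ s ∈ B, (A.filter (fun j => s ∈ Miss j)).card := by
    simp only [Finset.card_filter]
    exact Finset.sum_comm
  have hR : ∑ s ∈ B, (A.filter (fun j => s ∈ Miss j)).card ≤ (n - k) * B.card := by
    rw [mul_comm, ← Finset.sum_const_nat (fun s _ => rfl)]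
    apply Finset.sum_le_sum
    intro s _
    calc (A.filter (fun j => s ∈ Miss j)).card
        ≤ (Finset.univ.filter (fun j => ∀ i, L i j ≠ s)).card := by
          apply Finset.card_le_card
          intro j hj
          simp only [Finset.mem_filter, hMiss, Finset.mem_univ, true_and] at hj ⊢
          exact hj.2
      _ = n - k := hcard2 s
  have : (n - k) * A.card ≤ (n - k) * B.card := by
    rw [hL, hswap]; exact hR
  exact Nat.le_of_mul_le_mul_left this hpos
end

section
/- If every row and every column of an n×n 0-1 matrix M over ℕ has exactly k ones, then M can be written as a sum of k permutation matrices (Birkhoff–von Neumann / König for regular bipartite graphs); in particular the incidence matrix of a k×n Latin rectangle is a sum of k permutation matrices. -/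
/-- A 0-1 matrix over ℕ whose every row and column has exactly k ones is a sum
of k permutation matrices. -/
theorem stmt_18 (n k : ℕ) (M : Matrix (Fin n) (Fin n) ℕ)
    (h01 : ∀ i j, M i j = 0 ∨ M i j = 1)
    (hrow : ∀ i, ∑ j, M i j = k)
    (hcol : ∀ j, ∑ i, M i j = k) :
    ∃ σ : Fin k → Equiv.Perm (Fin n),
      M = ∑ t : Fin k, Matrix.of (fun i j => if σ t i = j then (1 : ℕ) else 0) := by
  induction k generalizing M with
  | zero =>
    refine ⟨fun t => t.elim0, ?_⟩
    ext i j
    simp only [Finset.univ_eq_empty, Finset.sum_empty, Matrix.zero_apply]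
    have := hrow i
    have h0 : M i j = 0 := by
      by_contra h
      have : 0 < ∑ j, M i j := Finset.sum_pos' (fun _ _ => Nat.zero_le _)
        ⟨j, Finset.mem_univ j, Nat.pos_of_ne_zero h⟩
      omega
    simpa using h0
  | succ k ih =>
    -- Hall's condition
    set t : Fin n → Finset (Fin n) := fun i => Finset.univ.filter (fun j => M i j = 1) with ht
    have hall : ∀ s : Finset (Fin n), s.card ≤ (s.biUnion t).card := by
      intro s
      have key : (k + 1) * s.card ≤ (k + 1) * (s.biUnion t).card := by
        calc (k + 1) * s.card = ∑ i ∈ s, ∑ j, M i j := by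
              simp [hrow, Finset.sum_const, mul_comm]
          _ = ∑ i ∈ s, ∑ j ∈ s.biUnion t, M i j := by
              refine Finset.sum_congr rfl (fun i hi => ?_)
              refine (Finset.sum_subset (Finset.subset_univ _) (fun j _ hj => ?_)).symm
              rcases h01 i j with h | h
              · exact h
              · exact absurd (Finset.mem_biUnion.mpr ⟨i, hi, by simp [ht, h]⟩) hj
          _ = ∑ j ∈ s.biUnion t, ∑ i ∈ s, M i j := Finset.sum_comm
          _ ≤ ∑ j ∈ s.biUnion t, ∑ i, M i j := by
              refine Finset.sum_le_sum (fun j _ => ?_)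
              exact Finset.sum_le_sum_of_subset (Finset.subset_univ _)
          _ = (k + 1) * (s.biUnion t).card := by
              simp [hcol, Finset.sum_const, mul_comm]
      exact Nat.le_of_mul_le_mul_left key (Nat.succ_pos k)
    obtain ⟨f, hfinj, hfmem⟩ :=
      (Finset.all_card_le_biUnion_card_iff_exists_injective t).mp hall
    have hf1 : ∀ i, M i (f i) = 1 := by
      intro i
      have := hfmem i
      simp only [ht, Finset.mem_filter] at this
      exact this.2
    let σ₀ : Equiv.Perm (Fin n) := Equiv.ofBijective f
      (Finite.injective_iff_bijective.mp hfinj)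
    have hσ₀ : ∀ i, σ₀ i = f i := fun i => rfl
    have hle : ∀ i j, (if σ₀ i = j then 1 else 0) ≤ M i j := by
      intro i j
      split
      · next h => rw [← h, hσ₀, hf1]
      · exact Nat.zero_le _
    set M' : Matrix (Fin n) (Fin n) ℕ :=
      fun i j => M i j - (if σ₀ i = j then 1 else 0) with hM'
    have hsum : ∀ i j, M i j = (if σ₀ i = j then 1 else 0) + M' i j := by
      intro i j
      rw [hM']
      exact (Nat.add_sub_cancel' (hle i j)).symm
    have h01' : ∀ i j, M' i j = 0 ∨ M' i j = 1 := by
      intro i j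
      rcases h01 i j with h | h <;> simp only [hM'] <;> split_ifs <;> omega
    have hrow' : ∀ i, ∑ j, M' i j = k := by
      intro i
      have : ∑ j, M i j = ∑ j, ((if σ₀ i = j then 1 else 0) + M' i j) :=
        Finset.sum_congr rfl (fun j _ => hsum i j)
      rw [hrow, Finset.sum_add_distrib, Finset.sum_ite_eq (Finset.univ) (σ₀ i)
        (fun _ => (1:ℕ))] at this
      simp at this
      omega
    have hcol' : ∀ j, ∑ i, M' i j = k := by
      intro j
      have : ∑ i, M i j = ∑ i, ((if σ₀ i = j then 1 else 0) + M' i j) :=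
        Finset.sum_congr rfl (fun i _ => hsum i j)
      have hind : ∑ i, (if σ₀ i = j then (1:ℕ) else 0) = 1 := by
        have : ∀ i, (σ₀ i = j) = (i = σ₀.symm j) := by
          intro i
          simp [Equiv.eq_symm_apply, eq_comm]
        simp only [this]
        simp
      rw [hcol, Finset.sum_add_distrib, hind] at this
      omega
    obtain ⟨σ', hσ'⟩ := ih M' h01' hrow' hcol'
    refine ⟨Fin.cons σ₀ σ', ?_⟩
    rw [Fin.sum_univ_succ]
    ext i j
    simp only [Matrix.add_apply, Matrix.sum_apply, Matrix.of_apply, Fin.cons_zero,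
      Fin.cons_succ]
    have := congrFun (congrFun hσ' i) j
    simp only [Matrix.sum_apply, Matrix.of_apply] at this
    rw [← this]
    exact hsum i j
end
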